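/- Let σ be a mixed strategy on A such that for every player i ∈ [n], either exactly one action in A_i is σ-supported, or there exist two σ-supported actions j, k ∈ A_i with j ≠ k and σ_{ij} ≠ σ_{ik}. Then σ is a strict coarse correlated equilibrium (sCCE) for the witness utility w, i.e., for every player i and every m ∈ A_i with p_{im} < 1, ∑_{a ∈ A} σ(a) (w_i(a) − w_i(m, a_{-i})) > 0. -/

import Mathlib

open scoped BigOperators

section Prelim

variable {n : ℕ}

/-- Joint action obtained from player `i`'s action `j` and the other players' actions `b`,
i.e. the joint action `(j, a_{-i})`. -/
def joinA {A : Fin n → Type*} (i : Fin n) (j : A i)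
    (b : ∀ l : {l : Fin n // l ≠ i}, A l) : ∀ l, A l :=
  fun l => if h : l = i then h.symm ▸ j else b ⟨l, h⟩

/-- The actions `a_{-i}` of all players other than `i` in the joint action `a`. -/
def restr {A : Fin n → Type*} (i : Fin n) (a : ∀ l, A l) :
    ∀ l : {l : Fin n // l ≠ i}, A l :=
  fun l => a l

/-- `σ` is a mixed strategy: nonnegative and sums to one. -/
def IsMixed {X : Type*} [Fintype X] (σ : X → ℝ) : Prop :=
  (∀ x, 0 ≤ σ x) ∧ ∑ x, σ x = 1

/-- Marginal probability `p_{ij}` that player `i` plays `j` under `σ`. -/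
noncomputable def marg {A : Fin n → Type*} [∀ l, Fintype (A l)]
    (σ : (∀ l, A l) → ℝ) (i : Fin n) (j : A i) : ℝ :=
  ∑ b : ∀ l : {l : Fin n // l ≠ i}, A l, σ (joinA i j b)

/-- Conditional distribution `σ_{ij}` over the other players' actions:
`σ_{ij}(a_{-i}) = σ(j, a_{-i}) / p_{ij}` if `p_{ij} > 0`, and the zero function otherwise. -/
noncomputable def condl {A : Fin n → Type*} [∀ l, Fintype (A l)]
    (σ : (∀ l, A l) → ℝ) (i : Fin n) (j : A i) :
    (∀ l : {l : Fin n // l ≠ i}, A l) → ℝ :=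
  fun b => if 0 < marg σ i j then σ (joinA i j b) / marg σ i j else 0

/-- Euclidean norm `‖·‖₂` on `ℝ^X`. -/
noncomputable def norm2 {X : Type*} [Fintype X] (f : X → ℝ) : ℝ :=
  Real.sqrt (∑ x, f x ^ 2)

/-- Euclidean inner product `⟨·,·⟩` on `ℝ^X`. -/
noncomputable def inner2 {X : Type*} [Fintype X] (f g : X → ℝ) : ℝ :=
  ∑ x, f x * g x

/-- The witness utility `w_i(j, a_{-i}) = σ_{ij}(a_{-i}) / ‖σ_{ij}‖₂` if `p_{ij} > 0`,
and `0` otherwise. -/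
noncomputable def wit {A : Fin n → Type*} [∀ l, Fintype (A l)]
    (σ : (∀ l, A l) → ℝ) (i : Fin n) (a : ∀ l, A l) : ℝ :=
  if 0 < marg σ i (a i) then condl σ i (a i) (restr i a) / norm2 (condl σ i (a i)) else 0

open Classical in
/-- `t_{ijk} = ‖σ_{ij}‖₂ - ⟨σ_{ij}, σ_{ik}⟩ / ‖σ_{ik}‖₂` if `σ_{ik} ≠ 0`,
and `t_{ijk} = ‖σ_{ij}‖₂` if `σ_{ik} = 0`. -/
noncomputable def tq {A : Fin n → Type*} [∀ l, Fintype (A l)]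
    (σ : (∀ l, A l) → ℝ) (i : Fin n) (j k : A i) : ℝ :=
  if condl σ i k = 0 then norm2 (condl σ i j)
  else norm2 (condl σ i j) - inner2 (condl σ i j) (condl σ i k) / norm2 (condl σ i k)

end Prelim

section MyAux

variable {X : Type*} [Fintype X]

lemma my_norm2_eq_norm (f : X → ℝ) :
    norm2 f = ‖(WithLp.equiv 2 (X → ℝ)).symm f‖ := by
  rw [EuclideanSpace.norm_eq, norm2]
  congr 1
  apply Finset.sum_congr rfl
  intro x _
  rw [Real.norm_eq_abs, sq_abs]
  rfl

lemma my_inner2_eq_inner (f g : X → ℝ) :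
    inner2 f g = inner ℝ ((WithLp.equiv 2 (X → ℝ)).symm f) ((WithLp.equiv 2 (X → ℝ)).symm g) := by
  rw [PiLp.inner_apply, inner2]
  apply Finset.sum_congr rfl
  intro x _
  simp [RCLike.inner_apply]
  ring

lemma my_norm2_nonneg (f : X → ℝ) : 0 ≤ norm2 f := Real.sqrt_nonneg _

lemma my_norm2_pos {f : X → ℝ} (h : f ≠ 0) : 0 < norm2 f := by
  rw [norm2, Real.sqrt_pos]
  obtain ⟨x, hx⟩ := Function.ne_iff.mp h
  exact Finset.sum_pos' (fun y _ => sq_nonneg _) ⟨x, Finset.mem_univ _, lt_of_le_of_ne (sq_nonneg _) (Ne.symm (pow_ne_zero 2 hx))⟩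

lemma my_norm2_mul_self (f : X → ℝ) : norm2 f * norm2 f = ∑ x, f x * f x := by
  rw [norm2, Real.mul_self_sqrt (Finset.sum_nonneg fun x _ => sq_nonneg (f x))]
  exact Finset.sum_congr rfl fun x _ => pow_two (f x)

lemma my_inner2_le (f g : X → ℝ) : inner2 f g ≤ norm2 f * norm2 g := by
  rw [my_inner2_eq_inner, my_norm2_eq_norm, my_norm2_eq_norm]
  exact real_inner_le_norm _ _

lemma my_inner2_lt {f g : X → ℝ} (_hf0 : ∀ x, 0 ≤ f x) (_hg0 : ∀ x, 0 ≤ g x)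
    (hf1 : ∑ x, f x = 1) (hg1 : ∑ x, g x = 1) (hne : f ≠ g) :
    inner2 f g < norm2 f * norm2 g := by
  rw [my_inner2_eq_inner, my_norm2_eq_norm, my_norm2_eq_norm]
  rw [inner_lt_norm_mul_iff_real]
  intro heq
  set F := (WithLp.equiv 2 (X → ℝ)).symm f
  set G := (WithLp.equiv 2 (X → ℝ)).symm g
  have hptw : ∀ x, ‖G‖ * f x = ‖F‖ * g x := by
    intro x
    have := congrArg (fun v : WithLp 2 (X → ℝ) => v x) heq
    simp at this
    exact this
  have hsum : ‖G‖ = ‖F‖ := by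
    have : ∑ x, ‖G‖ * f x = ∑ x, ‖F‖ * g x := Finset.sum_congr rfl fun x _ => hptw x
    rwa [← Finset.mul_sum, ← Finset.mul_sum, hf1, hg1, mul_one, mul_one] at this
  have hFpos : 0 < ‖F‖ := by
    rw [← my_norm2_eq_norm]
    apply my_norm2_pos
    intro h0
    rw [h0] at hf1
    simp at hf1
  apply hne
  funext x
  have := hptw x
  rw [hsum] at this
  exact mul_left_cancel₀ (ne_of_gt hFpos) this

end MyAux

section MyJoin

variable {n : ℕ} {A : Fin n → Type*}

lemma my_joinA_self (i : Fin n) (j : A i) (b : ∀ l : {l : Fin n // l ≠ i}, A l) :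
    joinA i j b i = j := by simp [joinA]

lemma my_restr_joinA (i : Fin n) (j : A i) (b : ∀ l : {l : Fin n // l ≠ i}, A l) :
    restr i (joinA i j b) = b := by
  funext l
  exact dif_neg l.2

lemma my_joinA_restr (i : Fin n) (a : ∀ l, A l) :
    joinA i (a i) (restr i a) = a := by
  funext l
  by_cases h : l = i
  · subst h; simp [joinA]
  · exact dif_neg h

/-- The reindexing equivalence. -/
def my_eqA (i : Fin n) : (∀ l, A l) ≃ (A i × ∀ l : {l : Fin n // l ≠ i}, A l) where
  toFun a := (a i, restr i a)
  invFun p := joinA i p.1 p.2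
  left_inv a := my_joinA_restr i a
  right_inv p := Prod.ext (my_joinA_self i p.1 p.2) (my_restr_joinA i p.1 p.2)

lemma my_sum_joinA [∀ l, Fintype (A l)] (i : Fin n) (F : (∀ l, A l) → ℝ) :
    ∑ a, F a = ∑ j : A i, ∑ b, F (joinA i j b) := by
  rw [← Equiv.sum_comp (my_eqA i).symm F, Fintype.sum_prod_type]
  rfl

end MyJoin

/-- **sCCE sufficiency via the witness utility.** If for every player `i` either exactly one
action of `A i` is `σ`-supported, or there are two `σ`-supported actions `j ≠ k` with
`σ_{ij} ≠ σ_{ik}`, then `σ` is a strict coarse correlated equilibrium for the witness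
utility `w`: for every player `i` and every `m` with `p_{im} < 1`,
`∑_a σ(a) (wᵢ(a) - wᵢ(m, a_{-i})) > 0`. -/
theorem sCCE_of_witness {n : ℕ} {A : Fin n → Type*}
    [∀ l, Fintype (A l)] [∀ l, Nonempty (A l)]
    (σ : (∀ l, A l) → ℝ) (hσ : IsMixed σ)
    (hc : ∀ i : Fin n,
      (∃! j : A i, 0 < marg σ i j) ∨
      (∃ j k : A i, j ≠ k ∧ 0 < marg σ i j ∧ 0 < marg σ i k ∧ condl σ i j ≠ condl σ i k)) :
    ∀ i : Fin n, ∀ m : A i, marg σ i m < 1 →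
      0 < ∑ a : ∀ l, A l, σ a * (wit σ i a - wit σ i (joinA i m (restr i a))) := by
  obtain ⟨hσ0, hσ1⟩ := hσ
  intro i m hm
  -- basic facts
  have hmarg0 : ∀ j : A i, 0 ≤ marg σ i j := fun j =>
    Finset.sum_nonneg fun b _ => hσ0 _
  have hmargsum : ∑ j : A i, marg σ i j = 1 := by
    rw [← hσ1, my_sum_joinA i σ]; rfl
  have hcond0 : ∀ (j : A i) b, 0 ≤ condl σ i j b := by
    intro j b
    rw [condl]
    split
    · exact div_nonneg (hσ0 _) (le_of_lt (by assumption))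
    · exact le_refl 0
  have hcondsum : ∀ j : A i, 0 < marg σ i j → ∑ b, condl σ i j b = 1 := by
    intro j hj
    simp only [condl, if_pos hj]
    rw [← Finset.sum_div]
    exact div_self (ne_of_gt hj)
  have hcondne : ∀ j : A i, 0 < marg σ i j → condl σ i j ≠ 0 := by
    intro j hj h0
    have := hcondsum j hj
    rw [h0] at this
    simp at this
  have hcondzero : ∀ j : A i, ¬ 0 < marg σ i j → condl σ i j = 0 := by
    intro j hj
    funext b
    simp [condl, hj]
  have hrec : ∀ j : A i, 0 < marg σ i j → ∀ b, σ (joinA i j b) = marg σ i j * condl σ i j b := by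
    intro j hj b
    rw [condl, if_pos hj, mul_div_cancel₀ _ (ne_of_gt hj)]
  have hzero : ∀ j : A i, ¬ 0 < marg σ i j → ∀ b, σ (joinA i j b) = 0 := by
    intro j hj b
    have hmz : marg σ i j = 0 := le_antisymm (not_lt.mp hj) (hmarg0 j)
    exact (Finset.sum_eq_zero_iff_of_nonneg (fun b _ => hσ0 _)).mp hmz b (Finset.mem_univ _)
  -- the per-action contribution
  set g : A i → ℝ := fun j =>
    if 0 < marg σ i j then
      marg σ i j * (norm2 (condl σ i j)
        - inner2 (condl σ i j) (condl σ i m) / norm2 (condl σ i m))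
    else 0 with hg
  -- rewrite the sum
  have hS : ∑ a : ∀ l, A l, σ a * (wit σ i a - wit σ i (joinA i m (restr i a)))
      = ∑ j : A i, g j := by
    rw [my_sum_joinA i]
    apply Finset.sum_congr rfl
    intro j _
    simp only [wit, my_joinA_self, my_restr_joinA]
    by_cases hj : 0 < marg σ i j
    · simp only [if_pos hj, hg]
      have hNj : 0 < norm2 (condl σ i j) := my_norm2_pos (hcondne j hj)
      by_cases hm' : 0 < marg σ i m
      · simp only [if_pos hm']
        have step : ∀ b, σ (joinA i j b) *
            (condl σ i j b / norm2 (condl σ i j) - condl σ i m b / norm2 (condl σ i m))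
            = marg σ i j * (condl σ i j b * condl σ i j b / norm2 (condl σ i j)
              - condl σ i j b * condl σ i m b / norm2 (condl σ i m)) := by
          intro b; rw [hrec j hj b]; ring
        rw [Finset.sum_congr rfl fun b _ => step b, ← Finset.mul_sum]
        congr 1
        rw [Finset.sum_sub_distrib, ← Finset.sum_div, ← Finset.sum_div,
          ← my_norm2_mul_self, mul_div_assoc,
          div_self (ne_of_gt hNj), mul_one]
        rfl
      · simp only [if_neg hm']
        have hc0 : condl σ i m = 0 := hcondzero m hm'
        have hinner : inner2 (condl σ i j) (condl σ i m) = 0 := by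
          rw [hc0, inner2]; simp
        rw [hinner, zero_div, sub_zero]
        have step : ∀ b, σ (joinA i j b) * (condl σ i j b / norm2 (condl σ i j) - 0)
            = marg σ i j * (condl σ i j b * condl σ i j b / norm2 (condl σ i j)) := by
          intro b; rw [hrec j hj b]; ring
        rw [Finset.sum_congr rfl fun b _ => step b, ← Finset.mul_sum]
        congr 1
        rw [← Finset.sum_div, ← my_norm2_mul_self, mul_div_assoc,
          div_self (ne_of_gt hNj), mul_one]
    · simp only [hg, if_neg hj]
      apply Finset.sum_eq_zero
      intro b _
      rw [hzero j hj b, zero_mul]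
  rw [hS]
  -- nonnegativity of each term
  have hg0 : ∀ j : A i, 0 ≤ g j := by
    intro j
    rw [hg]
    by_cases hj : 0 < marg σ i j
    · simp only [if_pos hj]
      apply mul_nonneg (le_of_lt hj)
      rw [sub_nonneg]
      by_cases hm' : 0 < marg σ i m
      · have hNm : 0 < norm2 (condl σ i m) := my_norm2_pos (hcondne m hm')
        rw [div_le_iff₀ hNm]
        exact my_inner2_le _ _
      · have hinner : inner2 (condl σ i j) (condl σ i m) = 0 := by
          rw [hcondzero m hm', inner2]; simp
        rw [hinner, zero_div]
        exact my_norm2_nonneg _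
    · simp [if_neg hj]
  -- strict positivity of one term
  have key : ∀ j : A i, 0 < marg σ i j → condl σ i j ≠ condl σ i m → 0 < g j := by
    intro j hj hne
    rw [hg]
    simp only [if_pos hj]
    apply mul_pos hj
    rw [sub_pos]
    have hNj : 0 < norm2 (condl σ i j) := my_norm2_pos (hcondne j hj)
    by_cases hm' : 0 < marg σ i m
    · have hNm : 0 < norm2 (condl σ i m) := my_norm2_pos (hcondne m hm')
      rw [div_lt_iff₀ hNm]
      exact my_inner2_lt (hcond0 j) (hcond0 m) (hcondsum j hj) (hcondsum m hm') hne
    · have hinner : inner2 (condl σ i j) (condl σ i m) = 0 := by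
        rw [hcondzero m hm', inner2]; simp
      rw [hinner, zero_div]
      exact hNj
  have hex : ∃ j : A i, 0 < g j := by
    rcases hc i with ⟨j, hj, huniq⟩ | ⟨j, k, hjk, hj, hk, hne⟩
    · -- unique supported action j: then marg j = 1, so m is unsupported
      have hmm : ¬ 0 < marg σ i m := by
        intro hm'
        have hmj : m = j := huniq m hm'
        have h1 : marg σ i j = 1 := by
          rw [← hmargsum]
          symm
          apply Finset.sum_eq_single
          · intro k _ hk
            by_contra hk0
            exact hk (huniq k (lt_of_le_of_ne (hmarg0 k) (Ne.symm hk0)))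
          · intro h; exact absurd (Finset.mem_univ j) h
        rw [hmj] at hm
        rw [h1] at hm
        exact lt_irrefl 1 hm
      refine ⟨j, key j hj ?_⟩
      rw [hcondzero m hmm]
      exact hcondne j hj
    · by_cases hjm : condl σ i j = condl σ i m
      · refine ⟨k, key k hk ?_⟩
        intro hkm
        exact hne (hjm.trans hkm.symm)
      · exact ⟨j, key j hj hjm⟩
  obtain ⟨j, hjpos⟩ := hex
  exact Finset.sum_pos' (fun j _ => hg0 j) ⟨j, Finset.mem_univ _, hjpos⟩
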